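/- Let n ≥ 1 and let a = (1,1,…,1) (n−1 ones) be the area sequence of the path graph P_n on n vertices. Then the unicellular LLT polynomial of a satisfies LLT_a(x;q) = Σ_{α ⊨ n} q^{a(set(α))} · r_α, the sum over all compositions α of n, where r_α is the ribbon Schur function. -/

import Mathlib

open scoped Classical

noncomputable section

/-- The monomial `x_{κ(1)} ⋯ x_{κ(n)}` recording the colors of vertices `1, …, n`,
as an exponent vector. -/
def colMono (n : ℕ) (κ : ℕ → ℕ) : ℕ →₀ ℕ :=
  ∑ v ∈ Finset.Icc 1 n, Finsupp.single (κ v) 1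

/-- A coloring `κ : [n] → ℕ`, normalized to be `0` outside of `[n] = {1, …, n}`. -/
def Supported (n : ℕ) (κ : ℕ → ℕ) : Prop :=
  ∀ v, v < 1 ∨ n < v → κ v = 0

/-- The number of ascents of a coloring `κ`: edges `(i,j) ∈ E` with `i < j` and `κ i < κ j`. -/
def asc (E : Finset (ℕ × ℕ)) (κ : ℕ → ℕ) : ℕ :=
  (E.filter fun e => e.1 < e.2 ∧ κ e.1 < κ e.2).card

/-- The unicellular LLT polynomial of a graph with vertex set `[n]` and edge set `E`:
`LLT = Σ_κ q^{asc κ} x_{κ(1)} ⋯ x_{κ(n)}`, a power series in `x_0, x_1, x_2, …` with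
coefficients in `ℤ[q]` (where `q = Polynomial.X`). -/
def LLT (n : ℕ) (E : Finset (ℕ × ℕ)) : MvPowerSeries ℕ (Polynomial ℤ) :=
  fun d => ∑ᶠ κ : ℕ → ℕ,
    if Supported n κ ∧ colMono n κ = d then (Polynomial.X : Polynomial ℤ) ^ asc E κ else 0

/-- `set(α) = {α₁, α₁+α₂, …, α₁+⋯+α_{ℓ-1}} ⊆ [n-1]` for a composition `α ⊨ n`. -/
def compSet {n : ℕ} (c : Composition n) : Finset ℕ :=
  (Finset.Ico 1 c.length).image c.sizeUpTo

/-- The condition on a coloring `κ : [n] → ℕ` in the definition of the ribbon Schur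
function `r_α`: `κ(i) < κ(i+1)` if `i ∈ set(α)` and `κ(i) ≥ κ(i+1)` otherwise. -/
def RibbonCond (n : ℕ) {N : ℕ} (c : Composition N) (κ : ℕ → ℕ) : Prop :=
  ∀ i, 1 ≤ i → i ≤ n - 1 →
    (i ∈ compSet c → κ i < κ (i + 1)) ∧ (i ∉ compSet c → κ (i + 1) ≤ κ i)

/-- The ribbon Schur function `r_α` of a composition `α ⊨ n`, as a power series in
`x_0, x_1, x_2, …` with coefficients in `ℤ[q]`. -/
def ribbon {n : ℕ} (c : Composition n) : MvPowerSeries ℕ (Polynomial ℤ) :=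
  fun d => ∑ᶠ κ : ℕ → ℕ,
    if Supported n κ ∧ colMono n κ = d ∧ RibbonCond n c κ then 1 else 0

/-- `v(S) = Σ_{s ∈ S} v_s`. -/
def wt (v : ℕ → ℕ) (S : Finset ℕ) : ℕ := ∑ s ∈ S, v s

/-- `Σ_{α ⊨ n} q^{v(set(α))} r_α`. -/
def qRibbonSum (n : ℕ) (v : ℕ → ℕ) : MvPowerSeries ℕ (Polynomial ℤ) :=
  ∑ α : Composition n, (Polynomial.X : Polynomial ℤ) ^ wt v (compSet α) • ribbon α

/-- Edge set of the path `P_n`: edges `(i, i+1)` for `1 ≤ i ≤ n-1`. -/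
def pathEdges (n : ℕ) : Finset (ℕ × ℕ) :=
  (Finset.Icc 1 (n - 1)).image fun i => (i, i + 1)

/-- Edge set of the complete graph `K_m`: edges `(i, j)` for `1 ≤ i < j ≤ m`. -/
def completeEdges (m : ℕ) : Finset (ℕ × ℕ) :=
  ((Finset.Icc 1 m) ×ˢ (Finset.Icc 1 m)).filter fun e => e.1 < e.2

/-- Edge set of the melting complete graph `K_m^{(k)}`: `K_m` with the `k` edges
`(1,m), (1,m-1), …, (1,m-k+1)` removed. -/
def meltingCompleteEdges (m k : ℕ) : Finset (ℕ × ℕ) :=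
  completeEdges m \ ((Finset.Icc (m - k + 1) m).image fun j => (1, j))

/-- Edge set of the concatenation `G + H`, where `G` has `n` vertices:
`E(G) ∪ {(i+n-1, j+n-1) : (i,j) ∈ E(H)}`. -/
def concatEdges (n : ℕ) (EG EH : Finset (ℕ × ℕ)) : Finset (ℕ × ℕ) :=
  EG ∪ EH.image fun e => (e.1 + n - 1, e.2 + n - 1)

/-- Edge set of the melting lollipop graph `L_{m,n}^{(k)} = P_{n+1} + K_m^{(k)}`
on `n + m` vertices. -/
def lollipopEdges (m n k : ℕ) : Finset (ℕ × ℕ) :=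
  concatEdges (n + 1) (pathEdges (n + 1)) (meltingCompleteEdges m k)

/-- The area sequence of the graph with edge set `E`:
`a_i = max({0} ∪ {j - i : (i,j) ∈ E})`. -/
def areaSeq (E : Finset (ℕ × ℕ)) (i : ℕ) : ℕ :=
  (E.filter fun e => e.1 = i).sup fun e => e.2 - e.1

/-- Edge set of the reverse `Gʳ` of a graph `G` on `n` vertices:
`{(n+1-j, n+1-i) : (i,j) ∈ E(G)}`. -/
def reverseEdges (n : ℕ) (E : Finset (ℕ × ℕ)) : Finset (ℕ × ℕ) :=
  E.image fun e => (n + 1 - e.2, n + 1 - e.1)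

/-- Edge set of the two-headed melting lollipop graph
`⁽ᵏ¹⁾ₘ₁L_{m₂,n}^{(k₂)} = (K_{m₁}^{(k₁)})ʳ + P_{n+2} + K_{m₂}^{(k₂)}`,
where `np1 = n + 1` (so that `n ≥ -1` is allowed). It has `m₁ + n + m₂` vertices. -/
def twoHeadedEdges (m1 k1 np1 m2 k2 : ℕ) : Finset (ℕ × ℕ) :=
  concatEdges (m1 + np1)
    (concatEdges m1 (reverseEdges m1 (meltingCompleteEdges m1 k1)) (pathEdges (np1 + 1)))
    (meltingCompleteEdges m2 k2)

/-- `E` is the edge set of a unit interval graph on vertex set `[N] = {1, …, N}`: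
edges `(i,j)` satisfy `1 ≤ i < j ≤ N`, and if `(i,j) ∈ E` and `i ≤ k < l ≤ j`
then `(k,l) ∈ E`. -/
def IsUnitInterval (N : ℕ) (E : Finset (ℕ × ℕ)) : Prop :=
  (∀ e ∈ E, 1 ≤ e.1 ∧ e.1 < e.2 ∧ e.2 ≤ N) ∧
  ∀ i j k l : ℕ, (i, j) ∈ E → i ≤ k → k < l → l ≤ j → (k, l) ∈ E

/-- `a` is the area sequence of some unit interval graph on `N` vertices. -/
def IsAreaSeq (N : ℕ) (a : ℕ → ℕ) : Prop :=
  ∃ E : Finset (ℕ × ℕ), IsUnitInterval N E ∧ ∀ i, a i = areaSeq E i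

/-- The unit interval graph determined by an area sequence `a` on `N` vertices:
edges `(i, j)` with `i < j ≤ i + a_i`. -/
def graphOfArea (N : ℕ) (a : ℕ → ℕ) : Finset (ℕ × ℕ) :=
  ((Finset.Icc 1 N) ×ˢ (Finset.Icc 1 N)).filter fun e => e.1 < e.2 ∧ e.2 ≤ e.1 + a e.1

/-- The unicellular LLT polynomial of an area sequence `a` on `N` vertices. -/
def LLTarea (N : ℕ) (a : ℕ → ℕ) : MvPowerSeries ℕ (Polynomial ℤ) :=
  LLT N (graphOfArea N a)

/-- A standard Young tableau of shape `μ`: a filling of the cells of `μ` with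
`1, …, |μ|` each occurring exactly once, strictly increasing along rows and columns
(and `0` outside `μ`). -/
structure StandardYT (μ : YoungDiagram) where
  entry : ℕ × ℕ → ℕ
  bijOn : Set.BijOn entry ↑μ.cells (Set.Icc 1 μ.card)
  zeros : ∀ c ∉ μ.cells, entry c = 0
  row_lt : ∀ i j1 j2 : ℕ, j1 < j2 → (i, j2) ∈ μ → entry (i, j1) < entry (i, j2)
  col_lt : ∀ i1 i2 j : ℕ, i1 < i2 → (i2, j) ∈ μ → entry (i1, j) < entry (i2, j)

/-- The descent set `D(T) ⊆ [N-1]` of a standard Young tableau `T`: those `k` such that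
`k + 1` lies in a strictly later row than `k`. -/
def descents {μ : YoungDiagram} (T : StandardYT μ) : Finset ℕ :=
  (Finset.Icc 1 (μ.card - 1)).filter fun k =>
    ∃ c1 ∈ μ.cells, ∃ c2 ∈ μ.cells,
      T.entry c1 = k ∧ T.entry c2 = k + 1 ∧ c1.1 < c2.1

/-- The weight (exponent vector) `x^T` of a semistandard Young tableau. -/
def ssytWeight {μ : YoungDiagram} (T : SemistandardYoungTableau μ) : ℕ →₀ ℕ :=
  ∑ c ∈ μ.cells, Finsupp.single (T c.1 c.2) 1

/-- The Schur function `s_μ = Σ_T x^T`, the sum over all semistandard Young tableaux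
of shape `μ`, as a power series in `x_0, x_1, x_2, …` with coefficients in `ℤ[q]`. -/
def schur (μ : YoungDiagram) : MvPowerSeries ℕ (Polynomial ℤ) :=
  fun d => ∑ᶠ T : SemistandardYoungTableau μ, if ssytWeight T = d then 1 else 0

/-- `Σ_{λ ⊢ N} Σ_{T ∈ SYT(λ)} q^{b(D(T))} s_λ`, where partitions `λ ⊢ N` are identified
with Young diagrams with `N` cells. -/
def descentSchurSum (N : ℕ) (b : ℕ → ℕ) : MvPowerSeries ℕ (Polynomial ℤ) :=
  ∑ᶠ (μ : YoungDiagram) (_ : μ.card = N) (T : StandardYT μ),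
    (Polynomial.X : Polynomial ℤ) ^ wt b (descents T) • schur μ

/-! ### Auxiliary lemmas for `llt_path` -/

section LltPathAux

variable {n : ℕ}

lemma compSet_mem_iff (c : Composition n) {j : ℕ} :
    j ∈ compSet c ↔ ∃ i, 1 ≤ i ∧ i < c.length ∧ c.sizeUpTo i = j := by
  simp only [compSet, Finset.mem_image, Finset.mem_Ico]
  constructor
  · rintro ⟨i, ⟨h1, h2⟩, h3⟩; exact ⟨i, h1, h2, h3⟩
  · rintro ⟨i, h1, h2, h3⟩; exact ⟨i, ⟨h1, h2⟩, h3⟩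

lemma compSet_subset (hn : 1 ≤ n) (c : Composition n) :
    compSet c ⊆ Finset.Icc 1 (n - 1) := by
  intro j hj
  rw [compSet_mem_iff] at hj
  obtain ⟨i, h1, h2, rfl⟩ := hj
  rw [Finset.mem_Icc]
  constructor
  · have h0 : c.sizeUpTo 0 < c.sizeUpTo 1 := c.sizeUpTo_strict_mono (by omega)
    have hm : c.sizeUpTo 1 ≤ c.sizeUpTo i := c.monotone_sizeUpTo h1
    have := c.sizeUpTo_zero
    omega
  · have h3 : c.sizeUpTo i < c.sizeUpTo (i + 1) := c.sizeUpTo_strict_mono h2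
    have h4 : c.sizeUpTo (i + 1) ≤ c.sizeUpTo c.length := c.monotone_sizeUpTo (by omega)
    have := c.sizeUpTo_length
    omega

lemma mem_boundaries_iff (hn : 1 ≤ n) (c : Composition n) {j : ℕ} (h1 : 1 ≤ j)
    (h2 : j ≤ n - 1) :
    (⟨j, by omega⟩ : Fin (n + 1)) ∈ c.boundaries ↔ j ∈ compSet c := by
  constructor
  · intro hj
    rw [Composition.boundaries, Finset.mem_map] at hj
    obtain ⟨i, _, hi⟩ := hj
    have hij : c.sizeUpTo (i : ℕ) = j := congrArg Fin.val hi
    rw [compSet_mem_iff]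
    have hi2 : (i : ℕ) ≤ c.length := by omega
    have h0 : 1 ≤ (i : ℕ) := by
      by_contra h
      have : (i : ℕ) = 0 := by omega
      rw [this, c.sizeUpTo_zero] at hij; omega
    have hlt : (i : ℕ) < c.length := by
      rcases lt_or_eq_of_le hi2 with h | h
      · exact h
      · exfalso; rw [h, c.sizeUpTo_length] at hij; omega
    exact ⟨i, h0, hlt, hij⟩
  · intro hj
    rw [compSet_mem_iff] at hj
    obtain ⟨i, hi1, hi2, hi3⟩ := hj
    rw [Composition.boundaries, Finset.mem_map]
    refine ⟨⟨i, by omega⟩, Finset.mem_univ _, ?_⟩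
    apply Fin.ext
    simpa [Composition.boundary] using hi3

open Fin.NatCast in
lemma boundaries_eq (hn : 1 ≤ n) (c : Composition n) :
    c.boundaries = insert 0 (insert (Fin.last n)
      ((compSet c).image (fun j : ℕ => (j : Fin (n + 1))))) := by
  ext x
  simp only [Finset.mem_insert, Finset.mem_image]
  constructor
  · intro hx
    by_cases hx0 : x = 0
    · exact Or.inl hx0
    by_cases hxl : x = Fin.last n
    · exact Or.inr (Or.inl hxl)
    right; right
    have h1 : 1 ≤ (x : ℕ) := by
      by_contra h
      exact hx0 (Fin.ext (show (x : ℕ) = 0 by omega))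
    have h2 : (x : ℕ) ≤ n - 1 := by
      have hxn : (x : ℕ) < n + 1 := x.2
      have : (x : ℕ) ≠ n := fun h => hxl (Fin.ext (by simpa [Fin.val_last] using h))
      omega
    have hmem : (⟨(x : ℕ), by omega⟩ : Fin (n + 1)) ∈ c.boundaries := by
      convert hx using 1
    rw [mem_boundaries_iff hn c h1 h2] at hmem
    refine ⟨(x : ℕ), hmem, ?_⟩
    apply Fin.ext
    rw [Fin.val_cast_of_lt (by omega : (x : ℕ) < n + 1)]
  · rintro (rfl | rfl | ⟨j, hj, rfl⟩)
    · rw [Composition.boundaries, Finset.mem_map]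
      exact ⟨0, Finset.mem_univ _, by simp [Composition.boundary, Fin.ext_iff,
        Composition.sizeUpTo_zero]⟩
    · rw [Composition.boundaries, Finset.mem_map]
      exact ⟨Fin.last c.length, Finset.mem_univ _, by
        simp [c.boundary_last]⟩
    · have hb := (compSet_subset hn c) hj
      rw [Finset.mem_Icc] at hb
      have heq : ((j : Fin (n + 1)) : ℕ) = j := Fin.val_cast_of_lt (by omega)
      have : (⟨j, by omega⟩ : Fin (n + 1)) ∈ c.boundaries :=
        (mem_boundaries_iff hn c hb.1 hb.2).2 hj
      convert this using 1
      exact Fin.ext heq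

lemma compSet_injective (hn : 1 ≤ n) :
    Function.Injective (compSet (n := n)) := by
  intro c1 c2 h
  have hb : c1.boundaries = c2.boundaries := by
    rw [boundaries_eq hn c1, boundaries_eq hn c2, h]
  have hcs : c1.toCompositionAsSet = c2.toCompositionAsSet := by
    apply CompositionAsSet.ext
    simpa [Composition.toCompositionAsSet_boundaries] using hb
  exact (compositionEquiv n).injective hcs

open Fin.NatCast in
lemma exists_compSet (hn : 1 ≤ n) (S : Finset ℕ) (hS : S ⊆ Finset.Icc 1 (n - 1)) :
    ∃ c : Composition n, compSet c = S := by
  classical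
  set B : Finset (Fin (n + 1)) := insert 0 (insert (Fin.last n)
    (S.image (fun j : ℕ => (j : Fin (n + 1))))) with hB
  have hz : (0 : Fin (n + 1)) ∈ B := Finset.mem_insert_self _ _
  have hl : Fin.last n ∈ B := Finset.mem_insert_of_mem (Finset.mem_insert_self _ _)
  set D : CompositionAsSet n := ⟨B, hz, hl⟩ with hD
  refine ⟨D.toComposition, ?_⟩
  have hbd : D.toComposition.boundaries = B := by
    rw [D.toComposition_boundaries]
  ext j
  constructor
  · intro hj
    have hb := (compSet_subset hn D.toComposition) hj
    rw [Finset.mem_Icc] at hb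
    have hmem : (⟨j, by omega⟩ : Fin (n + 1)) ∈ B := by
      rw [← hbd]
      exact (mem_boundaries_iff hn D.toComposition hb.1 hb.2).2 hj
    rw [hB] at hmem
    simp only [Finset.mem_insert, Finset.mem_image] at hmem
    rcases hmem with h | h | ⟨s, hs, hsj⟩
    · exfalso
      have := congrArg Fin.val h
      simp at this; omega
    · exfalso
      have := congrArg Fin.val h
      simp [Fin.val_last] at this; omega
    · have hsb := hS hs
      rw [Finset.mem_Icc] at hsb
      have : s = j := by
        have := congrArg Fin.val hsj
        rwa [Fin.val_cast_of_lt (by omega : s < n + 1)] at this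
      rwa [← this]
  · intro hj
    have hb := hS hj
    rw [Finset.mem_Icc] at hb
    rw [← mem_boundaries_iff hn D.toComposition hb.1 hb.2, hbd, hB]
    apply Finset.mem_insert_of_mem
    apply Finset.mem_insert_of_mem
    rw [Finset.mem_image]
    refine ⟨j, hj, Fin.ext ?_⟩
    exact Fin.val_cast_of_lt (by omega)

/-- The ascent set of a coloring on `[n]`. -/
def ascSet (n : ℕ) (κ : ℕ → ℕ) : Finset ℕ :=
  (Finset.Icc 1 (n - 1)).filter fun i => κ i < κ (i + 1)

lemma asc_pathEdges (κ : ℕ → ℕ) : asc (pathEdges n) κ = (ascSet n κ).card := by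
  classical
  rw [asc, pathEdges, Finset.filter_image]
  rw [Finset.card_image_of_injective _ (fun i j h => by
    simpa using congrArg Prod.fst h)]
  congr 1
  ext i
  simp [ascSet, Nat.lt_succ_self]

lemma ribbonCond_iff (hn : 1 ≤ n) (c : Composition n) (κ : ℕ → ℕ) :
    RibbonCond n c κ ↔ compSet c = ascSet n κ := by
  constructor
  · intro h
    ext i
    constructor
    · intro hi
      have hb := (compSet_subset hn c) hi
      rw [Finset.mem_Icc] at hb
      have := (h i hb.1 hb.2).1 hi
      simp [ascSet, Finset.mem_filter, Finset.mem_Icc]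
      exact ⟨⟨hb.1, hb.2⟩, this⟩
    · intro hi
      simp only [ascSet, Finset.mem_filter, Finset.mem_Icc] at hi
      by_contra hc
      have := (h i hi.1.1 hi.1.2).2 hc
      omega
  · intro h i h1 h2
    constructor
    · intro hi
      rw [h] at hi
      simp only [ascSet, Finset.mem_filter] at hi
      exact hi.2
    · intro hi
      rw [h] at hi
      simp only [ascSet, Finset.mem_filter, Finset.mem_Icc] at hi
      push_neg at hi
      have := hi ⟨h1, h2⟩
      omega

lemma finite_colorings (n : ℕ) (d : ℕ →₀ ℕ) :
    {κ : ℕ → ℕ | Supported n κ ∧ colMono n κ = d}.Finite := by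
  classical
  set T : Finset ℕ := insert 0 d.support with hT
  have key : ∀ κ ∈ {κ : ℕ → ℕ | Supported n κ ∧ colMono n κ = d}, ∀ v, κ v ∈ T := by
    rintro κ ⟨hs, hc⟩ v
    by_cases hv : v ∈ Finset.Icc 1 n
    · have happ : d (κ v) = ∑ u ∈ Finset.Icc 1 n,
          (Finsupp.single (κ u) 1 : ℕ →₀ ℕ) (κ v) := by
        rw [← hc, colMono]
        simp [Finsupp.finset_sum_apply]
      have hone : (1 : ℕ) ≤ d (κ v) := by
        rw [happ]
        have h2 := Finset.single_le_sum
          (f := fun u => (Finsupp.single (κ u) 1 : ℕ →₀ ℕ) (κ v))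
          (fun u _ => Nat.zero_le _) hv
        simpa using h2
      rw [hT]
      apply Finset.mem_insert_of_mem
      rw [Finsupp.mem_support_iff]
      omega
    · rw [Finset.mem_Icc] at hv
      have : κ v = 0 := hs v (by omega)
      rw [this, hT]
      exact Finset.mem_insert_self _ _
  rw [← Set.finite_coe_iff]
  refine Finite.of_injective
    (fun κ : {κ : ℕ → ℕ | Supported n κ ∧ colMono n κ = d} =>
      (fun v : (Finset.Icc 1 n : Finset ℕ) => (⟨κ.1 v, key _ κ.2 v⟩ : T))) ?_
  rintro ⟨κ1, hκ1⟩ ⟨κ2, hκ2⟩ h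
  ext v
  show κ1 v = κ2 v
  by_cases hv : v ∈ Finset.Icc 1 n
  · have := congrFun h ⟨v, hv⟩
    simpa using congrArg Subtype.val this
  · rw [Finset.mem_Icc] at hv
    rw [hκ1.1 v (by omega), hκ2.1 v (by omega)]

lemma key_sum (hn : 1 ≤ n) (a : ℕ → ℕ) (ha : ∀ i, 1 ≤ i → i ≤ n - 1 → a i = 1)
    (κ : ℕ → ℕ) :
    ∑ α : Composition n,
        (if RibbonCond n α κ then (Polynomial.X : Polynomial ℤ) ^ wt a (compSet α) else 0)
      = (Polynomial.X : Polynomial ℤ) ^ asc (pathEdges n) κ := by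
  classical
  have hsub : ascSet n κ ⊆ Finset.Icc 1 (n - 1) := Finset.filter_subset _ _
  obtain ⟨α₀, hα₀⟩ := exists_compSet hn (ascSet n κ) hsub
  have hwt : wt a (ascSet n κ) = (ascSet n κ).card := by
    rw [wt]
    rw [Finset.sum_congr rfl (fun s hs => ?_), Finset.sum_const, smul_eq_mul, mul_one]
    have := hsub hs
    rw [Finset.mem_Icc] at this
    exact ha s this.1 this.2
  rw [Finset.sum_eq_single α₀]
  · rw [if_pos ((ribbonCond_iff hn α₀ κ).2 hα₀), hα₀, hwt, asc_pathEdges]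
  · intro β _ hβ
    rw [if_neg]
    intro hR
    exact hβ (compSet_injective hn (by rw [(ribbonCond_iff hn β κ).1 hR, hα₀]))
  · intro h
    exact absurd (Finset.mem_univ α₀) h

end LltPathAux

/-- Lemma `lemma:path`. For `n ≥ 1`, let `a = (1, …, 1)` be the area
sequence of the path `P_n`. Then `LLT_a(x;q) = Σ_{α ⊨ n} q^{a(set(α))} r_α`. -/
theorem llt_path (n : ℕ) (hn : 1 ≤ n) (a : ℕ → ℕ)
    (ha : ∀ i, 1 ≤ i → i ≤ n - 1 → a i = 1) :
    LLT n (pathEdges n) = qRibbonSum n a := by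
  classical
  funext d
  have hF := finite_colorings n d
  set Fs : Finset (ℕ → ℕ) := hF.toFinset with hFs
  have hmemFs : ∀ κ, κ ∈ Fs ↔ Supported n κ ∧ colMono n κ = d := by
    intro κ; rw [hFs, Set.Finite.mem_toFinset]; rfl
  have hLLT : LLT n (pathEdges n) d
      = ∑ κ ∈ Fs, if Supported n κ ∧ colMono n κ = d
          then (Polynomial.X : Polynomial ℤ) ^ asc (pathEdges n) κ else 0 := by
    rw [LLT]
    apply finsum_eq_sum_of_support_subset
    intro κ hκ
    rw [Function.mem_support] at hκ
    by_contra h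
    apply hκ
    rw [if_neg]
    intro hP
    exact h (by simpa using (hmemFs κ).2 hP)
  have hRib : ∀ α : Composition n, ribbon α d
      = ∑ κ ∈ Fs, if Supported n κ ∧ colMono n κ = d ∧ RibbonCond n α κ
          then (1 : Polynomial ℤ) else 0 := by
    intro α
    rw [ribbon]
    apply finsum_eq_sum_of_support_subset
    intro κ hκ
    rw [Function.mem_support] at hκ
    by_contra h
    apply hκ
    rw [if_neg]
    rintro ⟨h1, h2, _⟩
    exact h (by simpa using (hmemFs κ).2 ⟨h1, h2⟩)
  have hQ : qRibbonSum n a d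
      = ∑ α : Composition n,
          (Polynomial.X : Polynomial ℤ) ^ wt a (compSet α) * ribbon α d := by
    rw [qRibbonSum]
    rw [show ((∑ α : Composition n,
        (Polynomial.X : Polynomial ℤ) ^ wt a (compSet α) • ribbon α) d)
      = ∑ α : Composition n,
        ((Polynomial.X : Polynomial ℤ) ^ wt a (compSet α) • ribbon α) d from
      Finset.sum_apply d Finset.univ _]
    rfl
  rw [hLLT, hQ]
  have hswap : ∀ α : Composition n,
      (Polynomial.X : Polynomial ℤ) ^ wt a (compSet α) * ribbon α d
      = ∑ κ ∈ Fs, if Supported n κ ∧ colMono n κ = d ∧ RibbonCond n α κ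
          then (Polynomial.X : Polynomial ℤ) ^ wt a (compSet α) else 0 := by
    intro α
    rw [hRib α, Finset.mul_sum]
    apply Finset.sum_congr rfl
    intro κ _
    rw [mul_ite, mul_one, mul_zero]
  rw [Finset.sum_congr rfl (fun α _ => hswap α), Finset.sum_comm]
  apply Finset.sum_congr rfl
  intro κ hκ
  obtain ⟨hs, hc⟩ := (hmemFs κ).1 hκ
  rw [if_pos ⟨hs, hc⟩]
  rw [← key_sum hn a ha κ]
  apply Finset.sum_congr rfl
  intro α _
  congr 1
  simp [hs, hc]
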